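/- The set { ((k+1)², k+1, k(k-1)/2, k) : k ∈ ℕ } ⊆ ℕ⁴ is not semilinear. -/

import Mathlib

/-- A linear subset of ℕᵈ: `v₀ + ℕv₁ + ⋯ + ℕv_k`. -/
def IsLinearSetNat {d : ℕ} (S : Set (Fin d → ℕ)) : Prop :=
  ∃ (v₀ : Fin d → ℕ) (k : ℕ) (v : Fin k → Fin d → ℕ),
    S = {x | ∃ c : Fin k → ℕ, x = v₀ + ∑ i, c i • v i}

/-- A semilinear subset of ℕᵈ: a finite union of linear sets. -/
def IsSemilinearSetNat {d : ℕ} (S : Set (Fin d → ℕ)) : Prop :=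
  ∃ (m : ℕ) (T : Fin m → Set (Fin d → ℕ)),
    (∀ i, IsLinearSetNat (T i)) ∧ S = ⋃ i, T i

/-- the set { ((k+1)², k+1, k(k-1)/2, k) : k ∈ ℕ } ⊆ ℕ⁴ is not semilinear. -/
theorem quadratic_tuples_not_semilinear :
    ¬ IsSemilinearSetNat
      {x : Fin 4 → ℕ | ∃ k : ℕ, x = ![(k + 1) ^ 2, k + 1, k * (k - 1) / 2, k]} := by
  set S := {x : Fin 4 → ℕ | ∃ k : ℕ, x = ![(k + 1) ^ 2, k + 1, k * (k - 1) / 2, k]} with hSdef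
  rintro ⟨m, T, hlin, hS⟩
  -- S is infinite
  have hinj : Function.Injective
      (fun k : ℕ => (![(k + 1) ^ 2, k + 1, k * (k - 1) / 2, k] : Fin 4 → ℕ)) := by
    intro a b hab
    have := congrFun hab 3
    simpa using this
  have hSinf : S.Infinite :=
    Set.infinite_of_injective_forall_mem hinj (fun k => ⟨k, rfl⟩)
  rw [hS] at hSinf
  have hex : ∃ i, (T i).Infinite := by
    by_contra h
    push_neg at h
    replace h : ∀ i, (T i).Finite := h
    exact hSinf (Set.finite_iUnion h)
  obtain ⟨i, hi⟩ := hex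
  obtain ⟨v₀, k, v, hT⟩ := hlin i
  have hsub : T i ⊆ S := hS ▸ Set.subset_iUnion T i
  have hv₀ : v₀ ∈ T i := by
    rw [hT]; exact ⟨0, by simp⟩
  obtain ⟨q, hq⟩ := (hi.diff (Set.finite_singleton v₀)).nonempty
  obtain ⟨hqT, hqne⟩ := hq
  simp only [Set.mem_singleton_iff] at hqne
  have hqT' := hqT
  rw [hT] at hqT'
  obtain ⟨c, hc⟩ := hqT'
  set r : Fin 4 → ℕ := v₀ + ∑ j, (2 * c j) • v j with hr
  have hrT : r ∈ T i := by rw [hT]; exact ⟨fun j => 2 * c j, rfl⟩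
  have hkey : ∀ x : Fin 4, v₀ x + r x = 2 * q x := by
    intro x
    have hq' : q x = v₀ x + ∑ j, c j * v j x := by
      rw [hc]; simp [Finset.sum_apply]
    have hr' : r x = v₀ x + ∑ j, 2 * c j * v j x := by
      rw [hr]; simp [Finset.sum_apply]
    rw [hq', hr']
    rw [show (∑ j, 2 * c j * v j x) = 2 * ∑ j, c j * v j x by
      rw [Finset.mul_sum]; exact Finset.sum_congr rfl fun j _ => by ring]
    ring
  obtain ⟨a, ha⟩ := hsub hv₀
  obtain ⟨b, hb⟩ := hsub hqT
  obtain ⟨e, he⟩ := hsub hrT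
  have hab : a ≠ b := by
    intro h
    apply hqne
    rw [hb, ha, h]
  have h3 := hkey 3
  rw [ha, hb, he] at h3
  simp at h3
  have h0 := hkey 0
  rw [ha, hb, he] at h0
  simp at h0
  -- h3 : a + e = 2 * b, h0 : (a+1)^2 + (e+1)^2 = 2*(b+1)^2
  have hZ3 : (a : ℤ) + e = 2 * b := by exact_mod_cast h3
  have hZ0 : ((a : ℤ) + 1) ^ 2 + ((e : ℤ) + 1) ^ 2 = 2 * ((b : ℤ) + 1) ^ 2 := by
    exact_mod_cast h0
  have hae : (a : ℤ) = e := by nlinarith [sq_nonneg ((a : ℤ) - e)]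
  have : (a : ℤ) = b := by omega
  exact hab (by exact_mod_cast this)
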